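/- Let p : Z → W be a continuous surjective map between topological spaces with all fibers finite of the same cardinality k, such that Z is path-connected and every path in W admits a lift to Z starting at any prescribed point of the fiber. Suppose v : Z → ℝ is a function such that for every path γ in Z, the change v(γ(1)) − v(γ(0)) depends only on the path p∘γ in W. Then v is constant on each fiber of p. -/

import Mathlib

/-- Let `p : Z → W` be a continuous surjective map between topological spaces with
all fibers finite of the same cardinality `k`, such that `Z` is path-connected and every path in
`W` admits a lift to `Z` starting at any prescribed point of the fiber. Suppose `v : Z → ℝ` is a
function such that for every path `γ` in `Z`, the change `v(γ(1)) − v(γ(0))` depends only on the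
path `p ∘ γ` in `W`. Then `v` is constant on each fiber of `p`. -/
theorem stmt5 {Z W : Type*} [TopologicalSpace Z] [TopologicalSpace W] [PathConnectedSpace Z]
    (p : Z → W) (hp : Continuous p) (hsurj : Function.Surjective p)
    (k : ℕ) (hk : 0 < k) (hfib : ∀ w : W, (p ⁻¹' {w}).ncard = k)
    (hlift : ∀ (γ : C(unitInterval, W)) (z : Z), p z = γ 0 →
      ∃ γ' : C(unitInterval, Z), γ' 0 = z ∧ ∀ t, p (γ' t) = γ t)
    (v : Z → ℝ)
    (hv : ∀ γ₁ γ₂ : C(unitInterval, Z), (∀ t, p (γ₁ t) = p (γ₂ t)) →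
      v (γ₁ 1) - v (γ₁ 0) = v (γ₂ 1) - v (γ₂ 0)) :
    ∀ z₁ z₂ : Z, p z₁ = p z₂ → v z₁ = v z₂ := by
  intro z₁ z₂ hpz
  -- the fiber over p z₂ is finite
  have hfin : (p ⁻¹' {p z₂}).Finite := by
    by_contra h
    have := Set.Infinite.ncard h
    rw [hfib] at this
    omega
  haveI : Finite (p ⁻¹' {p z₂}) := hfin.to_subtype
  -- a path from z₁ to z₂
  obtain ⟨γ⟩ : Nonempty (Path z₁ z₂) := ⟨PathConnectedSpace.somePath z₁ z₂⟩
  set c : C(unitInterval, W) := ⟨fun t => p (γ t), hp.comp γ.continuous⟩ with hc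
  have hc0 : c 0 = p z₂ := by simp [hc, hpz]
  have hc1 : c 1 = p z₂ := by simp [hc]
  set d : ℝ := v z₂ - v z₁ with hd
  -- step map on the fiber
  have step : ∀ z : p ⁻¹' {p z₂}, ∃ z' : p ⁻¹' {p z₂}, v (z' : Z) = v (z : Z) + d := by
    rintro ⟨z, hz⟩
    simp only [Set.mem_preimage, Set.mem_singleton_iff] at hz
    obtain ⟨γ', hγ'0, hγ'p⟩ := hlift c z (by rw [hz, hc0])
    refine ⟨⟨γ' 1, ?_⟩, ?_⟩
    · simp only [Set.mem_preimage, Set.mem_singleton_iff]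
      rw [hγ'p 1, hc1]
    · have := hv γ' γ.toContinuousMap (by
        intro t
        simp only [ContinuousMap.coe_coe, Path.coe_toContinuousMap]
        rw [hγ'p t]; rfl)
      simp only [ContinuousMap.coe_coe, Path.coe_toContinuousMap] at this
      rw [hγ'0] at this
      simp only [Path.source, Path.target] at this
      simp only [hd]
      linarith
  choose F hF using step
  -- iterate starting from z₂
  have hz₂mem : z₂ ∈ p ⁻¹' {p z₂} := rfl
  set a : ℕ → p ⁻¹' {p z₂} := fun n => F^[n] ⟨z₂, hz₂mem⟩ with ha
  have hav : ∀ n : ℕ, v (a n : Z) = v z₂ + n * d := by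
    intro n
    induction n with
    | zero => simp [ha]
    | succ n ih =>
      have : a (n + 1) = F (a n) := by
        simp [ha, Function.iterate_succ_apply']
      rw [this, hF, ih]
      push_cast
      ring
  have hd0 : d = 0 := by
    by_contra hne
    have hinj : Function.Injective a := by
      intro m n hmn
      have := congrArg (fun x : (p ⁻¹' {p z₂}) => v (x : Z)) hmn
      simp only [hav] at this
      have : (m : ℝ) = n := by
        have h2 : ((m : ℝ) - n) * d = 0 := by linear_combination this
        rcases mul_eq_zero.mp h2 with h | h
        · linarith
        · exact absurd h hne
      exact_mod_cast this
    haveI := Infinite.of_injective a hinj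
    exact not_finite ↥(p ⁻¹' {p z₂})
  simp only [hd] at hd0
  linarith
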